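/- arXiv:2007.11030 — 2 statements merged into one kernel-verified Lean document; each statement's English description precedes it below -/
import Mathlib

section
/- Let Ψ : [0,∞) → [0,∞) be a non-decreasing function, and let X be an integer-valued random variable with a symmetric discrete log-concave distribution and finite variance. Then M(X)·Ψ(Var(X)) ≤ sup_{0 ≤ p < 1} [ ((1-p)/(1+p)) · Ψ(2p/(1-p)^2) ]. (Proposition 7.3.) -/
open MeasureTheory ProbabilityTheory Real

section Seq

variable {a : ℕ → ℝ} {p : ℝ}

lemma myRatioMono (hnn : ∀ k, 0 ≤ a k) (hdc : ∀ k, a k = 0 → a (k + 1) = 0)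
    (hlc : ∀ k, a k * a (k + 2) ≤ a (k + 1) ^ 2) :
    ∀ j k, j ≤ k → a j * a (k + 1) ≤ a (j + 1) * a k := by
  intro j k hjk
  induction k, hjk using Nat.le_induction with
  | base => ring_nf; exact le_rfl
  | succ k hk ih =>
    by_cases hz : a (k + 2) = 0
    · rw [hz, mul_zero]; exact mul_nonneg (hnn _) (hnn _)
    · have hk1 : a (k + 1) ≠ 0 := fun h => hz (hdc _ h)
      have hk0 : a k ≠ 0 := fun h => hk1 (hdc _ h)
      have hk1' : 0 < a (k + 1) := lt_of_le_of_ne (hnn _) (Ne.symm hk1)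
      have hk0' : 0 < a k := lt_of_le_of_ne (hnn _) (Ne.symm hk0)
      have h2 := hlc k
      nlinarith [hnn j, hnn (j + 1), hnn (k + 2), mul_le_mul ih h2 (mul_nonneg (hnn k) (hnn (k+2))) (mul_nonneg (hnn (j+1)) (hnn k))]

lemma myPowLemma (hnn : ∀ k, 0 ≤ a k) (hdc : ∀ k, a k = 0 → a (k + 1) = 0)
    (hlc : ∀ k, a k * a (k + 2) ≤ a (k + 1) ^ 2) :
    ∀ k, a 0 * a (k + 1) ^ k ≤ a k ^ (k + 1) := by
  intro k
  induction k with
  | zero => simpa using le_rfl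
  | succ k ih =>
    by_cases hz : a (k + 2) = 0
    · rw [hz, zero_pow (Nat.succ_ne_zero k), mul_zero]
      exact pow_nonneg (hnn _) _
    · have hk1 : a (k + 1) ≠ 0 := fun h => hz (hdc _ h)
      have hk0 : a k ≠ 0 := fun h => hk1 (hdc _ h)
      have hk1' : 0 < a (k + 1) := lt_of_le_of_ne (hnn _) (Ne.symm hk1)
      have hk0' : 0 < a k := lt_of_le_of_ne (hnn _) (Ne.symm hk0)
      -- (a k * a (k+2))^(k+1) ≤ (a(k+1)^2)^(k+1)
      have h1 : (a k * a (k + 2)) ^ (k + 1) ≤ (a (k + 1) ^ 2) ^ (k + 1) :=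
        pow_le_pow_left₀ (mul_nonneg (hnn _) (hnn _)) (hlc k) _
      -- multiply ih with h1
      have h2 : (a 0 * a (k + 1) ^ k) * (a k ^ (k + 1) * a (k + 2) ^ (k + 1)) ≤
          a k ^ (k + 1) * (a (k + 1) ^ k * a (k + 1) ^ (k + 2)) := by
        calc (a 0 * a (k + 1) ^ k) * (a k ^ (k + 1) * a (k + 2) ^ (k + 1))
            ≤ a k ^ (k + 1) * (a (k + 1) ^ 2) ^ (k + 1) := by
              rw [mul_pow] at h1
              exact mul_le_mul ih h1 (mul_nonneg (pow_nonneg (hnn _) _) (pow_nonneg (hnn _) _)) (pow_nonneg (hnn k) _)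
          _ = a k ^ (k + 1) * (a (k + 1) ^ k * a (k + 1) ^ (k + 2)) := by
              rw [← pow_mul, ← pow_add]; ring_nf
      have h3 : (a 0 * a (k + 2) ^ (k + 1)) * (a k ^ (k + 1) * a (k + 1) ^ k) ≤
          (a (k + 1) ^ (k + 2)) * (a k ^ (k + 1) * a (k + 1) ^ k) := by nlinarith [h2]
      have hpos : 0 < a k ^ (k + 1) * a (k + 1) ^ k := by positivity
      exact le_of_mul_le_mul_right h3 hpos

lemma myCross (h0 : 0 < a 0) (hnn : ∀ k, 0 ≤ a k) (hdc : ∀ k, a k = 0 → a (k + 1) = 0)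
    (hlc : ∀ k, a k * a (k + 2) ≤ a (k + 1) ^ 2) (hp0 : 0 ≤ p) :
    ∀ j k, j ≤ k → a j < a 0 * p ^ j → a k ≤ a 0 * p ^ k := by
  intro j k hjk hlt
  by_cases haj : a j = 0
  · have hzero : ∀ m, j ≤ m → a m = 0 := by
      intro m hm
      induction m, hm using Nat.le_induction with
      | base => exact haj
      | succ m hm ih => exact hdc _ ih
    rw [hzero k hjk]; positivity
  · have hajpos : 0 < a j := lt_of_le_of_ne (hnn _) (Ne.symm haj)
    obtain ⟨j', rfl⟩ : ∃ j', j = j' + 1 := by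
      rcases Nat.eq_zero_or_pos j with h | h
      · exfalso; rw [h] at hlt; simp at hlt
      · exact ⟨j - 1, (Nat.succ_pred_eq_of_pos h).symm⟩
    have haj' : a j' ≠ 0 := fun h => haj (hdc _ h)
    have haj'pos : 0 < a j' := lt_of_le_of_ne (hnn _) (Ne.symm haj')
    -- step 1 : a (j'+1) < p * a j'
    have hstep1 : a (j' + 1) < p * a j' := by
      have hG := myPowLemma hnn hdc hlc j'
      have h1 : a (j' + 1) ^ (j' + 1) < (p * a j') ^ (j' + 1) := by
        calc a (j' + 1) ^ (j' + 1) = a (j' + 1) ^ j' * a (j' + 1) := by ring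
          _ < a (j' + 1) ^ j' * (a 0 * p ^ (j' + 1)) := by
              exact mul_lt_mul_of_pos_left hlt (by positivity)
          _ = (a 0 * a (j' + 1) ^ j') * p ^ (j' + 1) := by ring
          _ ≤ a j' ^ (j' + 1) * p ^ (j' + 1) := by
              exact mul_le_mul_of_nonneg_right hG (by positivity)
          _ = (a j' * p) ^ (j' + 1) := by rw [mul_pow]
          _ = (p * a j') ^ (j' + 1) := by rw [mul_comm]
      exact lt_of_pow_lt_pow_left₀ _ (by positivity) h1
    -- step 2 : ∀ i ≥ j', a (i+1) ≤ p * a i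
    have hstep2 : ∀ i, j' ≤ i → a (i + 1) ≤ p * a i := by
      intro i hi
      have hL := myRatioMono hnn hdc hlc j' i hi
      have : a j' * a (i + 1) ≤ a j' * (p * a i) := by
        calc a j' * a (i + 1) ≤ a (j' + 1) * a i := hL
          _ ≤ (p * a j') * a i := mul_le_mul_of_nonneg_right hstep1.le (hnn i)
          _ = a j' * (p * a i) := by ring
      exact le_of_mul_le_mul_left this haj'pos
    -- step 3
    have hstep3 : ∀ d, a (j' + 1 + d) ≤ a (j' + 1) * p ^ d := by
      intro d
      induction d with
      | zero => simp
      | succ d ih =>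
        have : a (j' + 1 + d + 1) ≤ p * a (j' + 1 + d) :=
          hstep2 _ (by omega)
        calc a (j' + 1 + (d + 1)) = a (j' + 1 + d + 1) := by ring_nf
          _ ≤ p * a (j' + 1 + d) := this
          _ ≤ p * (a (j' + 1) * p ^ d) := mul_le_mul_of_nonneg_left ih hp0
          _ = a (j' + 1) * p ^ (d + 1) := by ring
    obtain ⟨d, rfl⟩ : ∃ d, k = j' + 1 + d := ⟨k - (j' + 1), by omega⟩
    calc a (j' + 1 + d) ≤ a (j' + 1) * p ^ d := hstep3 d
      _ ≤ (a 0 * p ^ (j' + 1)) * p ^ d := mul_le_mul_of_nonneg_right hlt.le (by positivity)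
      _ = a 0 * p ^ (j' + 1 + d) := by rw [pow_add]; ring

end Seq

section Seq2

variable {a : ℕ → ℝ} {p : ℝ}

lemma mySumIdent : ∀ k : ℕ, ∑ n ∈ Finset.range k, (2 * (n : ℝ) + 1) = (k : ℝ) ^ 2 := by
  intro k
  induction k with
  | zero => simp
  | succ k ih => rw [Finset.sum_range_succ, ih]; push_cast; ring

lemma myTails (h0 : 0 < a 0) (hnn : ∀ k, 0 ≤ a k) (hdc : ∀ k, a k = 0 → a (k + 1) = 0)
    (hlc : ∀ k, a k * a (k + 2) ≤ a (k + 1) ^ 2) (hp0 : 0 ≤ p)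
    (hsa : Summable a) (hsg : Summable (fun k => a 0 * p ^ k))
    (heq : ∑' k, a k = ∑' k, a 0 * p ^ k) :
    ∀ n, 0 ≤ ∑' k, (a 0 * p ^ (k + n) - a (k + n)) := by
  intro n
  set b : ℕ → ℝ := fun k => a 0 * p ^ k - a k with hb
  have hsb : Summable b := hsg.sub hsa
  have htb : ∑' k, b k = 0 := by
    rw [hb]; rw [Summable.tsum_sub hsg hsa]; rw [heq]; ring
  by_cases hc : ∃ j, j < n ∧ a j < a 0 * p ^ j
  · obtain ⟨j, hjn, hj⟩ := hc
    apply tsum_nonneg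
    intro k
    have := myCross h0 hnn hdc hlc hp0 j (k + n) (by omega) hj
    linarith
  · push_neg at hc
    have hsum := Summable.sum_add_tsum_nat_add n hsb
    have hle : ∑ i ∈ Finset.range n, b i ≤ 0 := by
      apply Finset.sum_nonpos
      intro i hi
      have := hc i (Finset.mem_range.1 hi)
      simp only [hb]; linarith
    have : (0:ℝ) ≤ ∑' k, b (k + n) := by linarith [hsum, htb]
    simpa [hb] using this

lemma mySeqMain (h0 : 0 < a 0) (hnn : ∀ k, 0 ≤ a k) (hdc : ∀ k, a k = 0 → a (k + 1) = 0)
    (hlc : ∀ k, a k * a (k + 2) ≤ a (k + 1) ^ 2) (hp0 : 0 ≤ p) (hp1 : p < 1)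
    (hsa : Summable a)
    (heq : ∑' k, a k = ∑' k, a 0 * p ^ k)
    (hsq : Summable fun k : ℕ => (k : ℝ) ^ 2 * a k) :
    ∑' k : ℕ, (k : ℝ) ^ 2 * a k ≤ ∑' k : ℕ, (k : ℝ) ^ 2 * (a 0 * p ^ k) := by
  have hsg : Summable (fun k => a 0 * p ^ k) :=
    (summable_geometric_of_lt_one hp0 hp1).mul_left _
  have hnorm : ‖p‖ < 1 := by rwa [Real.norm_eq_abs, abs_of_nonneg hp0]
  have hsgq : Summable (fun k : ℕ => (k : ℝ) ^ 2 * (a 0 * p ^ k)) := by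
    have := (summable_pow_mul_geometric_of_norm_lt_one 2 hnorm (R := ℝ)).mul_left (a 0)
    exact this.congr fun k => by ring
  obtain ⟨b, hbdef⟩ : ∃ b : ℕ → ℝ, b = fun k => a 0 * p ^ k - a k := ⟨_, rfl⟩
  have hbk : ∀ k, b k = a 0 * p ^ k - a k := fun k => by rw [hbdef]
  have hsb : Summable b := by rw [hbdef]; exact hsg.sub hsa
  have hT : ∀ n, 0 ≤ ∑' k, b (k + n) := by
    intro n
    have := myTails h0 hnn hdc hlc hp0 hsa hsg heq n
    calc (0:ℝ) ≤ ∑' k, (a 0 * p ^ (k + n) - a (k + n)) := this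
      _ = ∑' k, b (k + n) := tsum_congr fun k => (hbk _).symm
  have hsbsq : Summable fun k : ℕ => (k : ℝ) ^ 2 * b k :=
    (hsgq.sub hsq).congr (fun k => by rw [hbk]; ring)
  obtain ⟨e, hedef⟩ : ∃ e : ℕ → ℕ → ℝ,
      e = fun (k n : ℕ) => if n < k then (2 * (n : ℝ) + 1) * b k else 0 := ⟨_, rfl⟩
  have hekn : ∀ k n, e k n = if n < k then (2 * (n : ℝ) + 1) * b k else 0 :=
    fun k n => by rw [hedef]
  have hrow : ∀ k, Summable fun n => e k n := by
    intro k
    apply summable_of_ne_finset_zero (s := Finset.range k)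
    intro n hn
    rw [hekn, if_neg (by simpa using Finset.mem_range.not.1 hn)]
  have hrowabs : ∀ k, Summable fun n => |e k n| := by
    intro k
    apply summable_of_ne_finset_zero (s := Finset.range k)
    intro n hn
    rw [hekn, if_neg (by simpa using Finset.mem_range.not.1 hn), abs_zero]
  have hrowval : ∀ k : ℕ, ∑' n : ℕ, e k n = (k : ℝ) ^ 2 * b k := by
    intro k
    rw [tsum_eq_sum (s := Finset.range k)
      (fun n hn => by rw [hekn, if_neg (by simpa using Finset.mem_range.not.1 hn)])]
    have h1 : ∀ n ∈ Finset.range k, e k n = (2 * (n : ℝ) + 1) * b k := by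
      intro n hn
      rw [hekn, if_pos (Finset.mem_range.1 hn)]
    rw [Finset.sum_congr rfl h1, ← Finset.sum_mul, mySumIdent]
  have hrowsum : ∀ k : ℕ, ∑' n : ℕ, |e k n| = (k : ℝ) ^ 2 * |b k| := by
    intro k
    rw [tsum_eq_sum (s := Finset.range k)
      (fun n hn => by rw [hekn, if_neg (by simpa using Finset.mem_range.not.1 hn), abs_zero])]
    have h1 : ∀ n ∈ Finset.range k, |e k n| = (2 * (n : ℝ) + 1) * |b k| := by
      intro n hn
      rw [hekn, if_pos (Finset.mem_range.1 hn), abs_mul, abs_of_nonneg (by positivity)]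
    rw [Finset.sum_congr rfl h1, ← Finset.sum_mul, mySumIdent]
  have habs2 : Summable fun k : ℕ => (k : ℝ) ^ 2 * |b k| := by
    apply Summable.of_nonneg_of_le (fun k => by positivity)
      (f := fun k : ℕ => (k : ℝ) ^ 2 * (a 0 * p ^ k) + (k : ℝ) ^ 2 * a k)
    · intro k
      have h1 : |b k| ≤ a 0 * p ^ k + a k := by
        rw [hbk]
        calc |a 0 * p ^ k - a k| ≤ |a 0 * p ^ k| + |a k| := abs_sub _ _
          _ = a 0 * p ^ k + a k := by
              rw [abs_of_nonneg (by positivity), abs_of_nonneg (hnn k)]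
      nlinarith [sq_nonneg (k : ℝ)]
    · exact hsgq.add hsq
  have heabs : Summable fun q : ℕ × ℕ => |Function.uncurry e q| := by
    rw [summable_prod_of_nonneg (fun q => abs_nonneg _)]
    exact ⟨hrowabs, habs2.congr fun k => (hrowsum k).symm⟩
  have he : Summable (Function.uncurry e) := heabs.of_abs
  have hcol : ∀ n, Summable fun k => e k n := by
    intro n
    have h1 : Summable (fun k => (2 * (n : ℝ) + 1) * b k) := hsb.mul_left _
    have h2 := h1.indicator {k | n < k}
    apply h2.congr
    intro k
    by_cases h : n < k
    · simp only [hekn, Set.indicator_apply, Set.mem_setOf_eq, if_pos h]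
    · simp only [hekn, Set.indicator_apply, Set.mem_setOf_eq, if_neg h]
  have hcolval : ∀ n : ℕ, ∑' k : ℕ, e k n = (2 * (n : ℝ) + 1) * ∑' k : ℕ, b (k + (n + 1)) := by
    intro n
    have hF := hcol n
    have h1 := Summable.sum_add_tsum_nat_add (n + 1) hF
    have h2 : ∑ i ∈ Finset.range (n + 1), e i n = 0 := by
      apply Finset.sum_eq_zero
      intro i hi
      rw [hekn, if_neg (by have := Finset.mem_range.1 hi; omega)]
    have h3 : ∀ k : ℕ, e (k + (n + 1)) n = (2 * (n : ℝ) + 1) * b (k + (n + 1)) := by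
      intro k
      rw [hekn, if_pos (by omega)]
    rw [h2, zero_add] at h1
    rw [← h1, tsum_congr h3, tsum_mul_left]
  have hkey : ∑' k : ℕ, (k : ℝ) ^ 2 * b k =
      ∑' n : ℕ, ((2 * (n : ℝ) + 1) * ∑' k : ℕ, b (k + (n + 1))) := by
    calc ∑' k : ℕ, (k : ℝ) ^ 2 * b k = ∑' (k : ℕ) (n : ℕ), e k n :=
          tsum_congr fun k => (hrowval k).symm
      _ = ∑' (n : ℕ) (k : ℕ), e k n := (Summable.tsum_comm' he hrow hcol).symm
      _ = ∑' n : ℕ, ((2 * (n : ℝ) + 1) * ∑' k : ℕ, b (k + (n + 1))) := tsum_congr hcolval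
  have hpos : 0 ≤ ∑' k : ℕ, (k : ℝ) ^ 2 * b k := by
    rw [hkey]
    apply tsum_nonneg
    intro n
    exact mul_nonneg (by positivity) (hT (n + 1))
  have hsplit : ∑' k : ℕ, (k : ℝ) ^ 2 * b k =
      ∑' k : ℕ, (k : ℝ) ^ 2 * (a 0 * p ^ k) - ∑' k : ℕ, (k : ℝ) ^ 2 * a k := by
    rw [← Summable.tsum_sub hsgq hsq]
    exact tsum_congr fun k => by rw [hbk]; ring
  linarith

lemma myGeomSq (hp0 : 0 ≤ p) (hp1 : p < 1) :
    ∑' k : ℕ, (k : ℝ) ^ 2 * p ^ k = p * (1 + p) / (1 - p) ^ 3 := by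
  have hnorm : ‖p‖ < 1 := by rwa [Real.norm_eq_abs, abs_of_nonneg hp0]
  have hC : Summable (fun k : ℕ => (k : ℝ) ^ 2 * p ^ k) :=
    (summable_pow_mul_geometric_of_norm_lt_one 2 hnorm (R := ℝ)).congr fun k => by ring
  have hB : Summable (fun k : ℕ => (k : ℝ) * p ^ k) :=
    (summable_pow_mul_geometric_of_norm_lt_one 1 hnorm (R := ℝ)).congr fun k => by
      simp [pow_one]
  have hA : Summable (fun k : ℕ => p ^ k) := summable_geometric_of_lt_one hp0 hp1
  have hAval : ∑' k : ℕ, p ^ k = (1 - p)⁻¹ := tsum_geometric_of_lt_one hp0 hp1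
  have hBval : ∑' k : ℕ, (k : ℝ) * p ^ k = p / (1 - p) ^ 2 :=
    tsum_coe_mul_geometric_of_norm_lt_one hnorm
  set C := ∑' k : ℕ, (k : ℝ) ^ 2 * p ^ k with hCdef
  have hshift : C = ∑' k : ℕ, ((k : ℝ) + 1) ^ 2 * p ^ (k + 1) := by
    rw [hCdef, Summable.tsum_eq_zero_add hC]
    push_cast
    simp
  have hexpand : ∀ k : ℕ, ((k : ℝ) + 1) ^ 2 * p ^ (k + 1) =
      p * ((k : ℝ) ^ 2 * p ^ k) + 2 * p * ((k : ℝ) * p ^ k) + p * p ^ k := by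
    intro k; rw [pow_succ]; ring
  have heq2 : C = p * C + 2 * p * (p / (1 - p) ^ 2) + p * (1 - p)⁻¹ := by
    conv_lhs => rw [hshift, tsum_congr hexpand]
    rw [Summable.tsum_add (((hC.mul_left p).add ((hB.mul_left (2 * p))))) (hA.mul_left p)]
    rw [Summable.tsum_add (hC.mul_left p) (hB.mul_left (2 * p))]
    rw [tsum_mul_left, tsum_mul_left, tsum_mul_left, hAval, hBval]
  have h1p : (1 : ℝ) - p ≠ 0 := by intro h; rw [sub_eq_zero] at h; exact absurd h.symm hp1.ne
  have key : ∀ D : ℝ, D = p * D + 2 * p * (p / (1 - p) ^ 2) + p * (1 - p)⁻¹ →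
      D = p * (1 + p) / (1 - p) ^ 3 := by
    intro D hD
    field_simp at hD ⊢
    nlinarith [hD]
  exact key C heq2

end Seq2

/-- The probability mass function of an integer-valued random variable `X`
on a probability space `(Ω, μ)`: `f(k) = P{X = k}`. -/
noncomputable def pmfOf {Ω : Type*} [MeasurableSpace Ω] (μ : Measure Ω) (X : Ω → ℤ)
    (k : ℤ) : ℝ :=
  (μ (X ⁻¹' {k})).toReal

/-- A probability function `f : ℤ → ℝ` is discrete log-concave: it is non-negative,
its support is an integer interval, and `f(k)^2 ≥ f(k-1)·f(k+1)` for all `k`. -/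
def IsDiscreteLogConcavePMF (f : ℤ → ℝ) : Prop :=
  (∀ k : ℤ, 0 ≤ f k) ∧
  (∀ k l m : ℤ, k ≤ l → l ≤ m → 0 < f k → 0 < f m → 0 < f l) ∧
  (∀ k : ℤ, f (k - 1) * f (k + 1) ≤ f k ^ 2)

/-- `M(X) = sup_{k ∈ ℤ} P{X = k}`. -/
noncomputable def maxProb {Ω : Type*} [MeasurableSpace Ω] (μ : Measure Ω) (X : Ω → ℤ) : ℝ :=
  ⨆ k : ℤ, pmfOf μ X k

/-- Proposition 7.3: for a non-decreasing `Ψ : [0,∞) → [0,∞)` and a symmetric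
discrete log-concave integer-valued random variable `X` with finite variance,
`M(X)·Ψ(Var(X)) ≤ sup_{0 ≤ p < 1} ((1-p)/(1+p))·Ψ(2p/(1-p)²)`. -/
theorem maxProb_mul_psi_variance_le
    {Ω : Type*} [MeasurableSpace Ω] (μ : Measure Ω) [IsProbabilityMeasure μ]
    (Ψ : ℝ → ℝ) (hΨ0 : ∀ x : ℝ, 0 ≤ x → 0 ≤ Ψ x)
    (hΨmono : ∀ x y : ℝ, 0 ≤ x → x ≤ y → Ψ x ≤ Ψ y)
    (X : Ω → ℤ) (hX : Measurable X)
    (hlc : IsDiscreteLogConcavePMF (pmfOf μ X))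
    (hsym : ∀ k : ℤ, pmfOf μ X (-k) = pmfOf μ X k)
    (hvar : MemLp (fun ω => (X ω : ℝ)) 2 μ) :
    ENNReal.ofReal (maxProb μ X * Ψ (variance (fun ω => (X ω : ℝ)) μ)) ≤
      ⨆ p : Set.Ico (0 : ℝ) 1,
        ENNReal.ofReal (((1 - (p : ℝ)) / (1 + (p : ℝ))) *
          Ψ (2 * (p : ℝ) / (1 - (p : ℝ)) ^ 2)) := by
  classical
  obtain ⟨hnn, hpos, hlc2⟩ := hlc
  set f : ℤ → ℝ := pmfOf μ X with hfdef
  have hmeas : ∀ k : ℤ, MeasurableSet (X ⁻¹' {k}) := fun k => hX (measurableSet_singleton k)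
  have hdisj : Pairwise (Function.onFun Disjoint fun k : ℤ => X ⁻¹' {k}) := by
    intro i j hij
    simp only [Function.onFun]
    apply Set.disjoint_left.2
    intro ω h1 h2
    apply hij
    simp only [Set.mem_preimage, Set.mem_singleton_iff] at h1 h2
    rw [← h1, ← h2]
  have hunion : ⋃ k : ℤ, X ⁻¹' {k} = Set.univ := by
    ext ω; simp
  have htsum_top : ∑' k : ℤ, μ (X ⁻¹' {k}) = 1 := by
    rw [← measure_iUnion hdisj hmeas, hunion, measure_univ]
  have hsummf : Summable f := by
    apply ENNReal.summable_toReal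
    rw [htsum_top]; exact ENNReal.one_ne_top
  have htsumf : ∑' k : ℤ, f k = 1 := by
    have h := (ENNReal.tsum_toReal_eq (fun k : ℤ => measure_ne_top μ (X ⁻¹' {k}))).symm
    calc ∑' k : ℤ, f k = (∑' k : ℤ, μ (X ⁻¹' {k})).toReal := h
      _ = 1 := by rw [htsum_top]; simp
  -- positivity of f 0
  have hf0 : 0 < f 0 := by
    have hne : ∃ k : ℤ, f k ≠ 0 := by
      by_contra h
      push_neg at h
      have : ∑' k : ℤ, f k = 0 := by simp [h]
      rw [htsumf] at this
      norm_num at this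
    obtain ⟨k0, hk0⟩ := hne
    have hk0p : 0 < f k0 := lt_of_le_of_ne (hnn _) (Ne.symm hk0)
    have hnegp : 0 < f (-k0) := by rw [hsym]; exact hk0p
    rcases le_total 0 k0 with h | h
    · exact hpos (-k0) 0 k0 (by omega) h hnegp hk0p
    · exact hpos k0 0 (-k0) h (by omega) hk0p hnegp
  -- monotonicity on the nonnegative side
  have hmono : ∀ n : ℕ, f ((n : ℤ) + 1) ≤ f (n : ℤ) := by
    intro n
    induction n with
    | zero =>
      have h := hlc2 0
      rw [zero_sub, zero_add, hsym 1] at h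
      have h1 := hnn 1
      have h0 := hnn 0
      push_cast
      nlinarith [h, h1, h0]
    | succ n ih =>
      by_cases hz : f ((n : ℤ) + 1 + 1) = 0
      · rw [(by push_cast; ring : ((n + 1 : ℕ) : ℤ) = (n : ℤ) + 1), hz]
        exact hnn _
      · have hz' : 0 < f ((n : ℤ) + 1 + 1) := lt_of_le_of_ne (hnn _) (Ne.symm hz)
        have hp1' : 0 < f ((n : ℤ) + 1) :=
          hpos 0 ((n : ℤ) + 1) ((n : ℤ) + 1 + 1) (by omega) (by omega) hf0 hz'
        have h := hlc2 ((n : ℤ) + 1)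
        have hsimp : ((n : ℤ) + 1 - 1) = (n : ℤ) := by ring
        rw [hsimp] at h
        have goal : f ((n : ℤ) + 1 + 1) ≤ f ((n : ℤ) + 1) := by nlinarith [ih, hnn n, hz'.le]
        rw [(by push_cast; ring : ((n + 1 : ℕ) : ℤ) = (n : ℤ) + 1)]
        exact goal
  have hineq : ∀ n : ℕ, f (n : ℤ) ≤ f 0 := by
    intro n
    induction n with
    | zero => simp
    | succ n ih =>
      have := hmono n
      push_cast at this ⊢
      linarith
  have hub : ∀ k : ℤ, f k ≤ f 0 := by
    intro k
    rcases Int.natAbs_eq k with h | h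
    · rw [h]; exact hineq _
    · rw [h, hsym]; exact hineq _
  have hMeq : maxProb μ X = f 0 := by
    apply le_antisymm
    · exact ciSup_le hub
    · exact le_ciSup ⟨f 0, by rintro x ⟨k, rfl⟩; exact hub k⟩ (0 : ℤ)
  have hM1 : f 0 ≤ 1 := by
    have := Summable.le_tsum hsummf 0 (fun i _ => hnn i)
    rwa [htsumf] at this
  -- set up p
  set M : ℝ := f 0 with hMdef
  have hM0 : 0 < M := hf0
  have h1M : 0 < 1 + M := by linarith
  set p : ℝ := (1 - M) / (1 + M) with hpdef
  have hp0 : 0 ≤ p := div_nonneg (by linarith) h1M.le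
  have hp1 : p < 1 := by rw [hpdef, div_lt_one h1M]; linarith
  have h1p : (0 : ℝ) < 1 - p := by linarith
  have h1p' : (0 : ℝ) < 1 + p := by linarith
  have hMp : (1 - p) / (1 + p) = M := by
    rw [hpdef]
    field_simp
    ring
  have hMp' : M * (1 + p) = 1 - p := by
    rw [← hMp]
    field_simp
  -- the sequence a
  obtain ⟨a, hadef⟩ : ∃ a : ℕ → ℝ, a = fun n : ℕ => f (n : ℤ) := ⟨_, rfl⟩
  have hak : ∀ n : ℕ, a n = f (n : ℤ) := fun n => by rw [hadef]
  have ha0 : a 0 = M := by rw [hak]; norm_num; exact hMdef.symm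
  have hann : ∀ n, 0 ≤ a n := fun n => by rw [hak]; exact hnn _
  have hadc : ∀ n, a n = 0 → a (n + 1) = 0 := by
    intro n h
    by_contra h2
    rw [hak] at h h2
    have h2' : 0 < f ((n : ℤ) + 1) := by
      have := lt_of_le_of_ne (hnn (((n : ℕ) + 1 : ℕ) : ℤ)) (Ne.symm h2)
      push_cast at this
      exact this
    have := hpos 0 (n : ℤ) ((n : ℤ) + 1) (by omega) (by omega) hf0 h2'
    rw [h] at this
    exact lt_irrefl _ this
  have halc : ∀ n, a n * a (n + 2) ≤ a (n + 1) ^ 2 := by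
    intro n
    have h := hlc2 ((n : ℤ) + 1)
    have h1 : ((n : ℤ) + 1 - 1) = (n : ℤ) := by ring
    rw [h1] at h
    rw [hak, hak, hak]
    push_cast
    have h2 : ((n : ℤ) + 1 + 1) = (n : ℤ) + 2 := by ring
    rw [h2] at h
    exact h
  -- summability over ℕ
  have hsa : Summable a :=
    (hsummf.comp_injective (fun x y h => by exact_mod_cast h : Function.Injective
      ((↑) : ℕ → ℤ))).congr (fun n => (hak n).symm)
  have hsneg : Summable (fun n : ℕ => f (-((n : ℤ) + 1))) :=
    hsummf.comp_injective (fun x y h => by omega)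
  have hsplitZ := tsum_of_nat_of_neg_add_one (hsa.congr (fun n => hak n)) hsneg
  have hnegeq : ∑' n : ℕ, f (-((n : ℤ) + 1)) = ∑' n : ℕ, f ((n : ℤ) + 1) :=
    tsum_congr fun n => hsym _
  have hshiftA : ∑' n : ℕ, a n = M + ∑' n : ℕ, f ((n : ℤ) + 1) := by
    rw [Summable.tsum_eq_zero_add hsa, ha0]
    congr 1
    apply tsum_congr
    intro n
    rw [hak]
    push_cast
    ring_nf
  have hA : ∑' n : ℕ, a n = (1 + M) / 2 := by
    have h1 : ∑' n : ℕ, f (n : ℤ) = ∑' n : ℕ, a n := tsum_congr fun n => (hak n).symm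
    rw [h1, hnegeq] at hsplitZ
    have h2 : ∑' n : ℕ, f ((n : ℤ) + 1) = ∑' n : ℕ, a n - M := by linarith [hshiftA]
    rw [htsumf, h2] at hsplitZ
    linarith
  have hgeomsum : ∑' n : ℕ, a 0 * p ^ n = (1 + M) / 2 := by
    rw [ha0, tsum_mul_left, tsum_geometric_of_lt_one hp0 hp1]
    rw [inv_eq_one_div]
    rw [hpdef]
    field_simp
    ring
    exact mul_inv_cancel₀ hM0.ne'
  have heqsum : ∑' n : ℕ, a n = ∑' n : ℕ, a 0 * p ^ n := by rw [hA, hgeomsum]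
  -- integrals via the pushforward measure
  have hXae : AEMeasurable X μ := hX.aemeasurable
  have hcast1 : Measurable (fun k : ℤ => (k : ℝ)) := measurable_from_top
  have hcast2 : Measurable (fun k : ℤ => (k : ℝ) ^ 2) := measurable_from_top
  have hν_singleton : ∀ k : ℤ, (μ.map X) {k} = μ (X ⁻¹' {k}) := fun k =>
    Measure.map_apply hX (measurableSet_singleton k)
  have hiX : Integrable (fun ω => (X ω : ℝ)) μ := hvar.integrable one_le_two
  have hiX2 : Integrable (fun ω => (X ω : ℝ) ^ 2) μ := hvar.integrable_sq
  have hiν : Integrable (fun k : ℤ => (k : ℝ)) (μ.map X) :=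
    (integrable_map_measure hcast1.aestronglyMeasurable hXae).mpr hiX
  have hiν2 : Integrable (fun k : ℤ => (k : ℝ) ^ 2) (μ.map X) :=
    (integrable_map_measure hcast2.aestronglyMeasurable hXae).mpr hiX2
  have hEX : ∫ ω, (X ω : ℝ) ∂μ = ∑' k : ℤ, f k * (k : ℝ) := by
    rw [← integral_map hXae hcast1.aestronglyMeasurable, integral_countable' hiν]
    apply tsum_congr
    intro k
    rw [measureReal_def, hν_singleton, smul_eq_mul]
    rfl
  have hEX0 : ∫ ω, (X ω : ℝ) ∂μ = 0 := by
    rw [hEX]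
    have h1 := (Equiv.neg ℤ).tsum_eq (fun k : ℤ => f k * (k : ℝ))
    have h2 : ∀ k : ℤ, f (Equiv.neg ℤ k) * (((Equiv.neg ℤ k : ℤ) : ℝ)) = -(f k * (k : ℝ)) := by
      intro k
      simp only [Equiv.neg_apply]
      rw [hsym]
      push_cast
      ring
    rw [tsum_congr h2, tsum_neg] at h1
    linarith
  have hEX2 : ∫ ω, (X ω : ℝ) ^ 2 ∂μ = ∑' k : ℤ, f k * (k : ℝ) ^ 2 := by
    rw [← integral_map hXae hcast2.aestronglyMeasurable, integral_countable' hiν2]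
    apply tsum_congr
    intro k
    rw [measureReal_def, hν_singleton, smul_eq_mul]
    rfl
  -- summability of the second moment series
  have hsqZ : Summable (fun k : ℤ => (k : ℝ) ^ 2 * f k) := by
    have hfin : ∫⁻ k : ℤ, (‖(k : ℝ) ^ 2‖₊ : ENNReal) ∂(μ.map X) < ⊤ := hiν2.2
    rw [lintegral_countable'] at hfin
    have h2 : Summable (fun k : ℤ => (((‖(k : ℝ) ^ 2‖₊ : ENNReal)) * (μ.map X) {k}).toReal) :=
      ENNReal.summable_toReal hfin.ne
    apply h2.congr
    intro k
    rw [ENNReal.toReal_mul, hν_singleton]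
    congr 1
    · rw [ENNReal.coe_toReal, coe_nnnorm, Real.norm_eq_abs, abs_of_nonneg (sq_nonneg _)]
  have hnatinj : Function.Injective ((↑) : ℕ → ℤ) := fun x y h => by exact_mod_cast h
  have hsqa : Summable (fun n : ℕ => (n : ℝ) ^ 2 * a n) := by
    apply (hsqZ.comp_injective hnatinj).congr
    intro n
    simp only [Function.comp_apply, hak]
    push_cast
    ring
  -- split the second moment over ℤ into two ℕ-sums
  have hF : Summable (fun k : ℤ => f k * (k : ℝ) ^ 2) := hsqZ.congr (fun k => by ring)
  have hFnat : Summable (fun n : ℕ => f (n : ℤ) * ((n : ℤ) : ℝ) ^ 2) :=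
    (hF.comp_injective hnatinj).congr (fun n => rfl)
  have hFneg : Summable (fun n : ℕ => f (-((n : ℤ) + 1)) * ((-((n : ℤ) + 1) : ℤ) : ℝ) ^ 2) :=
    (hF.comp_injective (fun x y h => by omega)).congr (fun n => rfl)
  have hZsum : ∑' k : ℤ, f k * (k : ℝ) ^ 2 = 2 * ∑' n : ℕ, (n : ℝ) ^ 2 * a n := by
    have h1 := tsum_of_nat_of_neg_add_one (f := fun k : ℤ => f k * (k : ℝ) ^ 2) hFnat hFneg
    have h2 : ∑' n : ℕ, f (-((n : ℤ) + 1)) * ((-((n : ℤ) + 1) : ℤ) : ℝ) ^ 2 =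
        ∑' n : ℕ, f ((n : ℤ) + 1) * (((n : ℤ) + 1 : ℤ) : ℝ) ^ 2 := by
      apply tsum_congr
      intro n
      rw [hsym]
      push_cast
      ring
    have h3 : ∑' n : ℕ, f (n : ℤ) * ((n : ℤ) : ℝ) ^ 2 =
        ∑' n : ℕ, f ((n : ℤ) + 1) * (((n : ℤ) + 1 : ℤ) : ℝ) ^ 2 := by
      rw [Summable.tsum_eq_zero_add hFnat]
      push_cast
      simp
    have h4 : ∑' n : ℕ, (n : ℝ) ^ 2 * a n =
        ∑' n : ℕ, f ((n : ℤ) + 1) * (((n : ℤ) + 1 : ℤ) : ℝ) ^ 2 := by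
      rw [Summable.tsum_eq_zero_add hsqa]
      have hterm : ∀ b : ℕ, ((b + 1 : ℕ) : ℝ) ^ 2 * a (b + 1) =
          f ((b : ℤ) + 1) * (((b : ℤ) + 1 : ℤ) : ℝ) ^ 2 := by
        intro b
        rw [hak]
        push_cast
        ring
      rw [tsum_congr hterm]
      simp
    rw [h1, h2, h3, h4]
    ring
  -- identify the variance
  have hVar : variance (fun ω => (X ω : ℝ)) μ = 2 * ∑' n : ℕ, (n : ℝ) ^ 2 * a n := by
    rw [variance_eq_sub hvar]
    have hpow : ∫ ω, ((fun ω => (X ω : ℝ)) ^ 2) ω ∂μ = ∫ ω, (X ω : ℝ) ^ 2 ∂μ := by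
      apply integral_congr_ae
      filter_upwards with ω
      simp [Pi.pow_apply]
    calc ∫ ω, ((fun ω => (X ω : ℝ)) ^ 2) ω ∂μ - (∫ ω, (X ω : ℝ) ∂μ) ^ 2
        = ∫ ω, (X ω : ℝ) ^ 2 ∂μ - (∫ ω, (X ω : ℝ) ∂μ) ^ 2 := by rw [hpow]
      _ = 2 * ∑' n : ℕ, (n : ℝ) ^ 2 * a n := by rw [hEX2, hEX0, hZsum]; ring
  -- the variance bound
  have hVle : variance (fun ω => (X ω : ℝ)) μ ≤ 2 * p / (1 - p) ^ 2 := by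
    rw [hVar]
    have hmain := mySeqMain (a := a) (p := p) (by rw [ha0]; exact hM0) hann hadc halc
      hp0 hp1 hsa heqsum hsqa
    have hg2 : ∑' n : ℕ, (n : ℝ) ^ 2 * (a 0 * p ^ n) = M * (p * (1 + p) / (1 - p) ^ 3) := by
      rw [ha0]
      rw [tsum_congr (fun n : ℕ => by ring : ∀ n : ℕ,
        (n : ℝ) ^ 2 * (M * p ^ n) = M * ((n : ℝ) ^ 2 * p ^ n))]
      rw [tsum_mul_left, myGeomSq hp0 hp1]
    have hfin2 : 2 * (M * (p * (1 + p) / (1 - p) ^ 3)) = 2 * p / (1 - p) ^ 2 := by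
      rw [← hMp]
      field_simp
    calc 2 * ∑' n : ℕ, (n : ℝ) ^ 2 * a n
        ≤ 2 * ∑' n : ℕ, (n : ℝ) ^ 2 * (a 0 * p ^ n) := by linarith [hmain]
      _ = 2 * p / (1 - p) ^ 2 := by rw [hg2]; exact hfin2
  -- conclusion
  have hstep : maxProb μ X * Ψ (variance (fun ω => (X ω : ℝ)) μ) ≤
      ((1 - p) / (1 + p)) * Ψ (2 * p / (1 - p) ^ 2) := by
    rw [hMeq, hMp]
    exact mul_le_mul_of_nonneg_left
      (hΨmono _ _ (variance_nonneg _ _) hVle) hM0.le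
  refine le_trans (ENNReal.ofReal_le_ofReal hstep) ?_
  exact le_iSup (fun q : Set.Ico (0 : ℝ) 1 => ENNReal.ofReal (((1 - (q : ℝ)) / (1 + (q : ℝ))) *
    Ψ (2 * (q : ℝ) / (1 - (q : ℝ)) ^ 2))) ⟨p, hp0, hp1⟩
end

section
/- Let X be any real-valued random variable with finite variance. Then for every λ > 0, the concentration function satisfies Q(X; λ) ≥ λ/√(λ^2 + 12·Var(X)). (Proposition 8.2.) -/
open MeasureTheory ProbabilityTheory Real
open scoped ENNReal

/-- The concentration function `Q(X;λ) = sup_x P{x ≤ X ≤ x + λ}`. -/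
noncomputable def concentration {Ω : Type*} [MeasurableSpace Ω] (μ : Measure Ω)
    (X : Ω → ℝ) (lam : ℝ) : ℝ :=
  ⨆ x : ℝ, (μ {ω | x ≤ X ω ∧ X ω ≤ x + lam}).toReal

lemma lint_Ico_sq (a b c : ℝ) (hab : a ≤ b) :
    ∫⁻ x in Set.Ico a b, ENNReal.ofReal ((x - c)^2) =
      ENNReal.ofReal (((b-c)^3 - (a-c)^3)/3) := by
  rw [setLIntegral_congr Ico_ae_eq_Ioc]
  have hi : IntegrableOn (fun x => (x-c)^2) (Set.Ioc a b) volume := by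
    apply Continuous.integrableOn_Ioc
    continuity
  rw [← ofReal_integral_eq_lintegral_ofReal hi (Filter.Eventually.of_forall fun x => sq_nonneg _)]
  congr 1
  rw [← intervalIntegral.integral_of_le hab]
  rw [intervalIntegral.integral_comp_sub_right (fun x => x^2) c, integral_pow]
  norm_num

lemma tonelli_aux {Ω : Type*} [MeasurableSpace Ω] (μ : Measure Ω) [IsProbabilityMeasure μ]
    (X : Ω → ℝ) (hX : Measurable X) (lam : ℝ) (w : ℝ → ℝ≥0∞) (hw : Measurable w) :
    ∫⁻ x, w x * μ {ω | X ω ≤ x ∧ x < X ω + lam} ∂volume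
      = ∫⁻ ω, ∫⁻ x in Set.Ico (X ω) (X ω + lam), w x ∂volume ∂μ := by
  set S : Set (ℝ × Ω) := {p | X p.2 ≤ p.1 ∧ p.1 < X p.2 + lam} with hSdef
  have hS : MeasurableSet S := by
    apply MeasurableSet.inter
    · exact measurableSet_le (hX.comp measurable_snd) measurable_fst
    · exact measurableSet_lt measurable_fst ((hX.comp measurable_snd).add_const lam)
  have h1 : ∀ x : ℝ, w x * μ {ω | X ω ≤ x ∧ x < X ω + lam}
      = ∫⁻ ω, w x * S.indicator 1 (x, ω) ∂μ := by
    intro x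
    have e : ∀ ω, w x * S.indicator 1 (x, ω)
        = w x * (Prod.mk x ⁻¹' S).indicator (1 : Ω → ℝ≥0∞) ω := fun ω => rfl
    simp_rw [e]
    rw [lintegral_const_mul _ (measurable_one.indicator (measurable_prodMk_left hS)),
      lintegral_indicator_one (measurable_prodMk_left hS)]
    rfl
  simp_rw [h1]
  rw [lintegral_lintegral_swap]
  · apply lintegral_congr
    intro ω
    have : ∀ x : ℝ, w x * S.indicator 1 (x, ω)
        = (Set.Ico (X ω) (X ω + lam)).indicator w x := by
      intro x
      by_cases hx : x ∈ Set.Ico (X ω) (X ω + lam)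
      · rw [Set.indicator_of_mem hx, Set.indicator_of_mem, Pi.one_apply, mul_one]
        exact ⟨hx.1, hx.2⟩
      · rw [Set.indicator_of_notMem hx, Set.indicator_of_notMem, mul_zero]
        intro h; exact hx ⟨h.1, h.2⟩
    simp_rw [this]
    rw [lintegral_indicator measurableSet_Ico]
  · exact ((hw.comp measurable_fst).mul (measurable_one.indicator hS)).aemeasurable
set_option maxHeartbeats 1000000 in
/-- Proposition 8.2: for any real-valued random variable `X` with finite variance
and any `λ > 0`, `Q(X;λ) ≥ λ/√(λ² + 12·Var(X))`. -/
theorem concentration_lower_bound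
    {Ω : Type*} [MeasurableSpace Ω] (μ : Measure Ω) [IsProbabilityMeasure μ]
    (X : Ω → ℝ) (hX : Measurable X)
    (hvar : MemLp X 2 μ)
    (lam : ℝ) (hlam : 0 < lam) :
    lam / Real.sqrt (lam ^ 2 + 12 * variance X μ) ≤ concentration μ X lam := by
  set q := concentration μ X lam with hqdef
  set V := variance X μ with hVdef
  set m := ∫ ω, X ω ∂μ with hmdef
  set c := m + lam / 2 with hcdef
  have hV0 : 0 ≤ V := variance_nonneg X μ
  have hbdd : BddAbove (Set.range fun x : ℝ => (μ {ω | x ≤ X ω ∧ X ω ≤ x + lam}).toReal) := by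
    refine ⟨1, ?_⟩
    rintro r ⟨x, rfl⟩
    calc (μ {ω | x ≤ X ω ∧ X ω ≤ x + lam}).toReal ≤ (1 : ℝ≥0∞).toReal :=
          ENNReal.toReal_mono ENNReal.one_ne_top prob_le_one
      _ = 1 := by simp
  have hq0 : 0 ≤ q := le_trans ENNReal.toReal_nonneg (le_ciSup hbdd 0)
  have hle : ∀ x : ℝ, μ {ω | X ω ≤ x ∧ x < X ω + lam} ≤ ENNReal.ofReal q := by
    intro x
    have hsub : {ω | X ω ≤ x ∧ x < X ω + lam}
        ⊆ {ω | x - lam ≤ X ω ∧ X ω ≤ (x - lam) + lam} := by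
      intro ω hω
      exact ⟨by linarith [hω.2], by linarith [hω.1]⟩
    calc μ {ω | X ω ≤ x ∧ x < X ω + lam}
        ≤ μ {ω | x - lam ≤ X ω ∧ X ω ≤ (x - lam) + lam} := measure_mono hsub
      _ = ENNReal.ofReal ((μ {ω | x - lam ≤ X ω ∧ X ω ≤ (x - lam) + lam}).toReal) :=
          (ENNReal.ofReal_toReal (measure_ne_top _ _)).symm
      _ ≤ ENNReal.ofReal q := ENNReal.ofReal_le_ofReal (le_ciSup hbdd (x - lam))
  have hmass : ∫⁻ x, μ {ω | X ω ≤ x ∧ x < X ω + lam} ∂volume = ENNReal.ofReal lam := by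
    have h := tonelli_aux μ X hX lam (fun _ => 1) measurable_const
    simp only [one_mul] at h
    rw [h]
    have h2 : ∀ ω : Ω, ∫⁻ x in Set.Ico (X ω) (X ω + lam), (1:ℝ≥0∞) ∂volume
        = ENNReal.ofReal lam := by
      intro ω
      rw [setLIntegral_one, Real.volume_Ico]
      congr 1; ring
    simp_rw [h2]
    simp
  have hX1 : Integrable X μ := hvar.integrable (by norm_num)
  have hX2 : Integrable (fun ω => X ω ^ 2) μ := hvar.integrable_sq
  have hg1 : Integrable (fun ω => lam * X ω ^ 2) μ := hX2.const_mul lam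
  have hg2 : Integrable (fun ω => (lam^2 - 2*lam*c) * X ω) μ := hX1.const_mul _
  have hg12 : Integrable (fun ω => lam * X ω ^ 2 + (lam^2 - 2*lam*c) * X ω) μ := hg1.add hg2
  have hg : Integrable (fun ω => lam * X ω ^ 2 + (lam^2 - 2*lam*c) * X ω
      + (lam*c^2 - lam^2*c + lam^3/3)) μ := hg12.add (integrable_const _)
  have hJ : ∫⁻ x, ENNReal.ofReal ((x - c)^2) * μ {ω | X ω ≤ x ∧ x < X ω + lam} ∂volume
      = ENNReal.ofReal (lam * V + lam ^ 3 / 12) := by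
    rw [tonelli_aux μ X hX lam _ (by measurability)]
    have heval : ∀ ω : Ω, ∫⁻ x in Set.Ico (X ω) (X ω + lam), ENNReal.ofReal ((x - c)^2) ∂volume
        = ENNReal.ofReal (lam * X ω ^ 2 + (lam^2 - 2*lam*c) * X ω
            + (lam*c^2 - lam^2*c + lam^3/3)) := by
      intro ω
      rw [lint_Ico_sq _ _ c (by linarith)]
      congr 1; ring
    simp_rw [heval]
    have hnn : 0 ≤ᵐ[μ] fun ω => lam * X ω ^ 2 + (lam^2 - 2*lam*c) * X ω
        + (lam*c^2 - lam^2*c + lam^3/3) := by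
      refine Filter.Eventually.of_forall fun ω => ?_
      show (0:ℝ) ≤ _
      nlinarith [sq_nonneg (X ω - c + lam/2), pow_pos hlam 3]
    rw [← ofReal_integral_eq_lintegral_ofReal hg hnn]
    congr 1
    rw [integral_add hg12 (integrable_const _), integral_add hg1 hg2,
      integral_const_mul, integral_const_mul, integral_const]
    have hvd : V = (∫ ω, X ω ^ 2 ∂μ) - m ^ 2 := by
      rw [hVdef, hmdef]
      simpa using variance_eq_sub hvar
    simp only [measure_univ, ENNReal.toReal_one, smul_eq_mul, one_mul, probReal_univ]
    rw [hvd, hcdef, ← hmdef]; ring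
  have hmeas : Measurable fun x : ℝ => μ {ω | X ω ≤ x ∧ x < X ω + lam} := by
    have hS : MeasurableSet {p : ℝ × Ω | X p.2 ≤ p.1 ∧ p.1 < X p.2 + lam} := by
      apply MeasurableSet.inter
      · exact measurableSet_le (hX.comp measurable_snd) measurable_fst
      · exact measurableSet_lt measurable_fst ((hX.comp measurable_snd).add_const lam)
    exact measurable_measure_prodMk_left hS
  -- the bathtub inequality, for every a > 0
  have key : ∀ a : ℝ, 0 < a →
      a^2*lam + 2*a^3/3*q ≤ (lam * V + lam^3/12) + a^2*q*(2*a) := by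
    intro a ha
    have hpt : ∀ x : ℝ,
        ENNReal.ofReal (a^2) * μ {ω | X ω ≤ x ∧ x < X ω + lam}
          + (Set.Ico (c-a) (c+a)).indicator
              (fun x => ENNReal.ofReal ((x - c)^2) * ENNReal.ofReal q) x
        ≤ ENNReal.ofReal ((x - c)^2) * μ {ω | X ω ≤ x ∧ x < X ω + lam}
          + (Set.Ico (c-a) (c+a)).indicator (fun _ => ENNReal.ofReal (a^2) * ENNReal.ofReal q) x := by
      intro x
      set r := (μ {ω | X ω ≤ x ∧ x < X ω + lam}).toReal with hrdef
      have hrtop : μ {ω | X ω ≤ x ∧ x < X ω + lam} ≠ ⊤ := measure_ne_top _ _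
      have hrofReal : μ {ω | X ω ≤ x ∧ x < X ω + lam} = ENNReal.ofReal r :=
        (ENNReal.ofReal_toReal hrtop).symm
      have hr0 : 0 ≤ r := ENNReal.toReal_nonneg
      have hrq : r ≤ q := by
        have h := hle x
        rw [hrofReal] at h
        exact (ENNReal.ofReal_le_ofReal_iff hq0).mp h
      rw [hrofReal]
      by_cases hx : x ∈ Set.Ico (c-a) (c+a)
      · rw [Set.indicator_of_mem hx, Set.indicator_of_mem hx]
        have hw : (x - c)^2 ≤ a^2 := by
          rcases Set.mem_Ico.mp hx with ⟨h1, h2⟩; nlinarith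
        rw [← ENNReal.ofReal_mul (sq_nonneg a), ← ENNReal.ofReal_mul (sq_nonneg _),
          ← ENNReal.ofReal_mul (sq_nonneg _), ← ENNReal.ofReal_mul (sq_nonneg a),
          ← ENNReal.ofReal_add (by positivity) (by positivity),
          ← ENNReal.ofReal_add (by positivity) (by positivity)]
        apply ENNReal.ofReal_le_ofReal
        nlinarith [mul_nonneg (sub_nonneg.mpr hw) (sub_nonneg.mpr hrq)]
      · rw [Set.indicator_of_notMem hx, Set.indicator_of_notMem hx, add_zero, add_zero]
        have hw : a^2 ≤ (x - c)^2 := by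
          rw [Set.mem_Ico, not_and_or] at hx
          push_neg at hx
          rcases hx with h1 | h1
          · nlinarith
          · nlinarith
        exact mul_le_mul_left (ENNReal.ofReal_le_ofReal hw) _
    have hint := lintegral_mono (μ := volume) hpt
    have hIco : ∫⁻ x in Set.Ico (c-a) (c+a), ENNReal.ofReal ((x - c)^2) ∂volume
        = ENNReal.ofReal (2*a^3/3) := by
      rw [lint_Ico_sq _ _ c (by linarith)]
      congr 1; ring
    have hIcoq : ∫⁻ x in Set.Ico (c-a) (c+a),
        ENNReal.ofReal ((x - c)^2) * ENNReal.ofReal q ∂volume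
        = ENNReal.ofReal (2*a^3/3) * ENNReal.ofReal q := by
      rw [lintegral_mul_const _ (by measurability), hIco]
    rw [lintegral_add_left (hmeas.const_mul _),
      lintegral_add_left (f := fun x : ℝ => ENNReal.ofReal ((x - c)^2) * μ {ω | X ω ≤ x ∧ x < X ω + lam})
        (((by measurability : Measurable fun x : ℝ => ENNReal.ofReal ((x - c)^2))).mul hmeas),
      lintegral_const_mul _ hmeas, hmass, hJ,
      lintegral_indicator measurableSet_Ico, lintegral_indicator measurableSet_Ico,
      setLIntegral_const, hIcoq, Real.volume_Ico,
      show c + a - (c - a) = 2*a by ring] at hint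
    have e1 : ENNReal.ofReal (a^2) * ENNReal.ofReal lam = ENNReal.ofReal (a^2*lam) :=
      (ENNReal.ofReal_mul (sq_nonneg a)).symm
    have e2 : ENNReal.ofReal (2*a^3/3) * ENNReal.ofReal q = ENNReal.ofReal (2*a^3/3*q) :=
      (ENNReal.ofReal_mul (by positivity)).symm
    have e3 : ENNReal.ofReal (a^2) * ENNReal.ofReal q * ENNReal.ofReal (2*a)
        = ENNReal.ofReal (a^2*q*(2*a)) := by
      rw [← ENNReal.ofReal_mul (sq_nonneg a), ← ENNReal.ofReal_mul (by positivity)]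
    rw [e1, e2, e3, ← ENNReal.ofReal_add (by positivity) (by positivity),
      ← ENNReal.ofReal_add (by positivity) (by positivity)] at hint
    exact (ENNReal.ofReal_le_ofReal_iff (by positivity)).mp hint
  have hqpos : 0 < q := by
    rcases hq0.lt_or_eq with h | h
    · exact h
    · exfalso
      set a := Real.sqrt (V + lam^2/12) + 1 with hadef
      have ha : 0 < a := by positivity
      have h2 := key a ha
      rw [← h] at h2
      have hs : Real.sqrt (V + lam^2/12) ^ 2 = V + lam^2/12 :=
        Real.sq_sqrt (by positivity)
      have hs0 : 0 ≤ Real.sqrt (V + lam^2/12) := Real.sqrt_nonneg _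
      nlinarith [h2, hs, hs0, hlam]
  set a := lam / (2*q) with hadef
  have hapos : 0 < a := by positivity
  have ha' : 2*q*a = lam := by
    rw [hadef]; field_simp
  have hkey := key a hapos
  rw [← ha'] at hkey
  have h4 : a^2*(1-q^2) ≤ 3*V := by
    nlinarith [hkey, mul_pos hqpos hapos, hqpos, hapos]
  have hfinal : lam^2 ≤ q^2 * (lam^2 + 12*V) := by
    have h5 : q^2*(a^2*(1-q^2)) ≤ q^2*(3*V) := mul_le_mul_of_nonneg_left h4 (sq_nonneg q)
    rw [← ha']
    nlinarith [h5]
  have hs : 0 < Real.sqrt (lam^2 + 12*V) := Real.sqrt_pos.mpr (by positivity)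
  rw [div_le_iff₀ hs]
  calc lam = Real.sqrt (lam^2) := (Real.sqrt_sq hlam.le).symm
    _ ≤ Real.sqrt (q^2 * (lam^2 + 12*V)) := Real.sqrt_le_sqrt hfinal
    _ = q * Real.sqrt (lam^2 + 12*V) := by
        rw [Real.sqrt_mul (sq_nonneg q), Real.sqrt_sq hq0]
end
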